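/- Let (S,+,□,∂) be an arithmetical semiring. Then for each n ≥ 2: Σ_{r=2}^{⌈√n⌉−1, r ∣ n} S□(r)·S□(n/r) ≤ S⁺(n) − S□(n) − C(n), where C(n) = binom(S□(√n), 2) if n is a perfect square and 0 otherwise. -/

import Mathlib

/-- Number of elements of degree `n`. -/
noncomputable def cntAll {S : Type*} (deg : S → ℕ) (n : ℕ) : ℕ :=
  Nat.card {x : S // deg x = n}

/-- Number of elements of degree `n` lying in the set `P`. -/
noncomputable def cntIn {S : Type*} (deg : S → ℕ) (P : Set S) (n : ℕ) : ℕ :=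
  Nat.card {x : S // deg x = n ∧ x ∈ P}

lemma cntIn_eq_card {S : Type*} (deg : S → ℕ) (P : Set S) (n : ℕ)
    (hfin : {x : S | deg x = n}.Finite) [DecidablePred (· ∈ P)] :
    cntIn deg P n = ((hfin.toFinset.filter (· ∈ P))).card := by
  have h1 : {x : S | deg x = n ∧ x ∈ P} = ↑(hfin.toFinset.filter (· ∈ P)) := by
    ext x; simp [Set.Finite.mem_toFinset]
  calc cntIn deg P n = Set.ncard {x : S | deg x = n ∧ x ∈ P} := rfl
    _ = _ := by rw [h1, Set.ncard_coe_finset]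

lemma aux_key {S : Type*} [CommSemiring S] (Sq : Set S) (a b : Sq) :
    (Finsupp.single a 1 + Finsupp.single b 1).prod (fun q n => (q : S) ^ n) = (a : S) * b := by
  classical
  rw [Finsupp.prod_add_index' (fun a => pow_zero _) (fun a b₁ b₂ => pow_add _ _ _)]
  simp

lemma aux_pair_eq {S : Type*} [CommSemiring S] (Sp Sq : Set S)
    (hSqSp : Sq ⊆ Sp)
    (hmul_mem : ∀ x ∈ Sp, ∀ y ∈ Sp, x * y ∈ Sp)
    (hmul_free : ∀ x ∈ Sp, ∃! f : Sq →₀ ℕ, x = f.prod fun q n => (q : S) ^ n)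
    (q1 q2 q3 q4 : S) (m1 : q1 ∈ Sq) (m2 : q2 ∈ Sq) (m3 : q3 ∈ Sq) (m4 : q4 ∈ Sq)
    (h : q1 * q2 = q3 * q4) :
    (q1 = q3 ∧ q2 = q4) ∨ (q1 = q4 ∧ q2 = q3) := by
  classical
  set Q1 : Sq := ⟨q1, m1⟩
  set Q2 : Sq := ⟨q2, m2⟩
  set Q3 : Sq := ⟨q3, m3⟩
  set Q4 : Sq := ⟨q4, m4⟩
  have hx : q1 * q2 ∈ Sp := hmul_mem _ (hSqSp m1) _ (hSqSp m2)
  obtain ⟨f, hf, huniq⟩ := hmul_free _ hx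
  have e1 : Finsupp.single Q1 1 + Finsupp.single Q2 1 = f :=
    huniq _ (aux_key Sq Q1 Q2).symm
  have e2 : Finsupp.single Q3 1 + Finsupp.single Q4 1 = f :=
    huniq _ (h.trans (aux_key Sq Q3 Q4).symm)
  have e : Finsupp.single Q1 1 + Finsupp.single Q2 1
      = Finsupp.single Q3 1 + Finsupp.single Q4 1 := by rw [e1, e2]
  rcases eq_or_ne Q1 Q3 with h13 | h13
  · left
    refine ⟨congrArg Subtype.val h13, ?_⟩
    have : Finsupp.single Q2 1 = Finsupp.single Q4 1 := by
      rw [h13] at e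
      exact add_left_cancel e
    exact congrArg Subtype.val ((Finsupp.single_left_inj one_ne_zero).mp this)
  · right
    have h14 : Q1 = Q4 := by
      by_contra h14
      have h' := DFunLike.congr_fun e Q1
      rw [Finsupp.add_apply, Finsupp.add_apply, Finsupp.single_apply, Finsupp.single_apply,
        Finsupp.single_apply, Finsupp.single_apply, if_pos rfl,
        if_neg (show ¬ (Q3 = Q1) from Ne.symm h13),
        if_neg (show ¬ (Q4 = Q1) from fun hh => h14 hh.symm)] at h'
      split_ifs at h' <;> omega
    refine ⟨congrArg Subtype.val h14, ?_⟩
    rw [h14, add_comm (Finsupp.single Q3 1)] at e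
    have : Finsupp.single Q2 1 = Finsupp.single Q3 1 := add_left_cancel e
    exact congrArg Subtype.val ((Finsupp.single_left_inj one_ne_zero).mp this)

lemma aux_not_prime {S : Type*} [CommSemiring S] (Sp Sq : Set S) (deg : S → ℕ)
    (hdeg_mul : ∀ x y : S, deg (x * y) = deg x * deg y)
    (hSqSp : Sq ⊆ Sp)
    (hmul_mem : ∀ x ∈ Sp, ∀ y ∈ Sp, x * y ∈ Sp)
    (hmul_free : ∀ x ∈ Sp, ∃! f : Sq →₀ ℕ, x = f.prod fun q n => (q : S) ^ n)
    (q1 q2 : S) (m1 : q1 ∈ Sq) (m2 : q2 ∈ Sq)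
    (hd1 : 2 ≤ deg q1) (hd2 : 2 ≤ deg q2) :
    q1 * q2 ∉ Sq := by
  classical
  intro hx
  have hxp : q1 * q2 ∈ Sp := hmul_mem _ (hSqSp m1) _ (hSqSp m2)
  obtain ⟨f, hf, huniq⟩ := hmul_free _ hxp
  set Q1 : Sq := ⟨q1, m1⟩
  set Q2 : Sq := ⟨q2, m2⟩
  set X : Sq := ⟨q1 * q2, hx⟩
  have e1 : Finsupp.single Q1 1 + Finsupp.single Q2 1 = f :=
    huniq _ (aux_key Sq Q1 Q2).symm
  have e2 : Finsupp.single X 1 = f := huniq _ (by simp [X])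
  have hdx : deg (q1 * q2) = deg q1 * deg q2 := hdeg_mul _ _
  have hne1 : Q1 ≠ X := by
    intro hh
    have h1 : deg q1 = deg (q1 * q2) := congrArg deg (congrArg Subtype.val hh)
    rw [hdx] at h1
    nlinarith
  have hne2 : Q2 ≠ X := by
    intro hh
    have h1 : deg q2 = deg (q1 * q2) := congrArg deg (congrArg Subtype.val hh)
    rw [hdx] at h1
    nlinarith
  have e : Finsupp.single Q1 1 + Finsupp.single Q2 1 = Finsupp.single X 1 := by
    rw [e1, e2]
  have h' := DFunLike.congr_fun e X
  rw [Finsupp.add_apply, Finsupp.single_apply, Finsupp.single_apply, Finsupp.single_apply,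
    if_pos rfl, if_neg hne1, if_neg hne2] at h'
  omega

lemma stmt6_aux {S : Type*} [CommSemiring S]
    (Sp Sq : Set S) (deg : S → ℕ)
    (hdeg_mul : ∀ x y : S, deg (x * y) = deg x * deg y)
    (hfib : ∀ n : ℕ, {x : S | deg x = n}.Finite)
    (hSqSp : Sq ⊆ Sp)
    (hmul_mem : ∀ x ∈ Sp, ∀ y ∈ Sp, x * y ∈ Sp)
    (hmul_free : ∀ x ∈ Sp, ∃! f : Sq →₀ ℕ, x = f.prod fun q n => (q : S) ^ n) :
    ∀ n : ℕ, 2 ≤ n →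
      (∑ r ∈ n.divisors.filter fun r => 2 ≤ r ∧ r * r < n,
            cntIn deg Sq r * cntIn deg Sq (n / r)) +
          cntIn deg Sq n +
          (if n.sqrt * n.sqrt = n then (cntIn deg Sq n.sqrt).choose 2 else 0) ≤
        cntIn deg Sp n := by
  classical
  intro n hn
  have pe := aux_pair_eq Sp Sq hSqSp hmul_mem hmul_free
  have np := aux_not_prime Sp Sq deg hdeg_mul hSqSp hmul_mem hmul_free
  set Qf : ℕ → Finset S := fun m => (hfib m).toFinset.filter (· ∈ Sq) with hQf
  set Pf : Finset S := (hfib n).toFinset.filter (· ∈ Sp) with hPf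
  have hQmem : ∀ m x, x ∈ Qf m ↔ deg x = m ∧ x ∈ Sq := by
    intro m x; simp [hQf, Set.Finite.mem_toFinset]
  have hPmem : ∀ x, x ∈ Pf ↔ deg x = n ∧ x ∈ Sp := by
    intro x; simp [hPf, Set.Finite.mem_toFinset]
  have hcntQ : ∀ m, cntIn deg Sq m = (Qf m).card := fun m => cntIn_eq_card deg Sq m (hfib m)
  have hcntP : cntIn deg Sp n = Pf.card := cntIn_eq_card deg Sp n (hfib n)
  set D := n.divisors.filter (fun r => 2 ≤ r ∧ r * r < n) with hD
  have hDfact : ∀ r ∈ D, r * (n / r) = n ∧ 2 ≤ r ∧ r < n / r := by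
    intro r hr
    rw [hD, Finset.mem_filter, Nat.mem_divisors] at hr
    obtain ⟨⟨hdvd, hn0⟩, h2, hlt⟩ := hr
    have hmul : r * (n / r) = n := Nat.mul_div_cancel' hdvd
    refine ⟨hmul, h2, ?_⟩
    have : r * r < r * (n / r) := by rw [hmul]; exact hlt
    exact Nat.lt_of_mul_lt_mul_left this
  set A : ℕ → Finset S := fun r => ((Qf r) ×ˢ (Qf (n / r))).image (fun p => p.1 * p.2) with hA
  -- elements of A r are products
  have hAelt : ∀ r, ∀ x ∈ A r, ∃ a b : S, a ∈ Sq ∧ b ∈ Sq ∧ deg a = r ∧ deg b = n / r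
      ∧ x = a * b := by
    intro r x hx
    rw [hA] at hx
    simp only [Finset.mem_image, Finset.mem_product] at hx
    obtain ⟨⟨a, b⟩, ⟨ha, hb⟩, hxe⟩ := hx
    rw [hQmem] at ha hb
    exact ⟨a, b, ha.2, hb.2, ha.1, hb.1, hxe.symm⟩
  have hAcard : ∀ r ∈ D, (A r).card = (Qf r).card * (Qf (n / r)).card := by
    intro r hr
    obtain ⟨hmulr, h2r, hltr⟩ := hDfact r hr
    rw [hA]
    rw [Finset.card_image_of_injOn, Finset.card_product]
    intro p hp q hq hpq
    simp only [Finset.coe_product, Set.mem_prod, Finset.mem_coe] at hp hq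
    rw [hQmem, hQmem] at hp hq
    obtain ⟨⟨hp1, hp1q⟩, hp2, hp2q⟩ := hp
    obtain ⟨⟨hq1, hq1q⟩, hq2, hq2q⟩ := hq
    rcases pe _ _ _ _ hp1q hp2q hq1q hq2q hpq with ⟨e1, e2⟩ | ⟨e1, e2⟩
    · exact Prod.ext e1 e2
    · exfalso
      have h' := hq2
      rw [← e1, hp1] at h'
      exact (Nat.ne_of_lt hltr) h'
  have hAsub : ∀ r ∈ D, A r ⊆ Pf := by
    intro r hr x hx
    obtain ⟨a, b, haq, hbq, hda, hdb, hxe⟩ := hAelt r x hx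
    obtain ⟨hmulr, h2r, hltr⟩ := hDfact r hr
    rw [hPmem, hxe, hdeg_mul, hda, hdb]
    exact ⟨hmulr, hmul_mem _ (hSqSp haq) _ (hSqSp hbq)⟩
  -- the square part
  set C : Finset S :=
    if n.sqrt * n.sqrt = n then ((Qf n.sqrt).powersetCard 2).image (fun s => s.prod id)
    else ∅ with hC
  have hm2 : n.sqrt * n.sqrt = n → 2 ≤ n.sqrt := by
    intro hsq
    by_contra h
    push_neg at h
    have h1 : n.sqrt ≤ 1 := by omega
    have h2 : n.sqrt * n.sqrt ≤ 1 := by nlinarith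
    omega
  have hCelt : ∀ x ∈ C, n.sqrt * n.sqrt = n ∧ ∃ a b : S, a ∈ Sq ∧ b ∈ Sq ∧
      deg a = n.sqrt ∧ deg b = n.sqrt ∧ a ≠ b ∧ x = a * b := by
    intro x hx
    rw [hC] at hx
    split_ifs at hx with hsq
    · refine ⟨hsq, ?_⟩
      simp only [Finset.mem_image, Finset.mem_powersetCard] at hx
      obtain ⟨s, ⟨hssub, hscard⟩, hxe⟩ := hx
      obtain ⟨a, b, hab, rfl⟩ := Finset.card_eq_two.mp hscard
      have ha := (hQmem _ a).mp (hssub (by simp))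
      have hb := (hQmem _ b).mp (hssub (by simp))
      rw [Finset.prod_pair hab] at hxe
      exact ⟨a, b, ha.2, hb.2, ha.1, hb.1, hab, hxe.symm⟩
    · simp at hx
  have hCcard : C.card = if n.sqrt * n.sqrt = n then ((Qf n.sqrt).card).choose 2 else 0 := by
    rw [hC]
    split_ifs with hsq
    · rw [Finset.card_image_of_injOn, Finset.card_powersetCard]
      intro s hs t ht hst
      simp only [Finset.mem_coe, Finset.mem_powersetCard] at hs ht
      obtain ⟨hssub, hscard⟩ := hs
      obtain ⟨htsub, htcard⟩ := ht
      obtain ⟨a, b, hab, rfl⟩ := Finset.card_eq_two.mp hscard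
      obtain ⟨c, d, hcd, rfl⟩ := Finset.card_eq_two.mp htcard
      have hst' : a * b = c * d := by
        simpa [Finset.prod_pair hab, Finset.prod_pair hcd] using hst
      have haq := (hQmem _ a).mp (hssub (by simp))
      have hbq := (hQmem _ b).mp (hssub (by simp))
      have hcq := (hQmem _ c).mp (htsub (by simp))
      have hdq := (hQmem _ d).mp (htsub (by simp))
      rcases pe _ _ _ _ haq.2 hbq.2 hcq.2 hdq.2 hst' with ⟨e1, e2⟩ | ⟨e1, e2⟩
      · rw [e1, e2]
      · rw [e1, e2, Finset.pair_comm]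
    · simp
  have hCsub : C ⊆ Pf := by
    intro x hx
    obtain ⟨hsq, a, b, haq, hbq, hda, hdb, hab, hxe⟩ := hCelt x hx
    rw [hPmem, hxe, hdeg_mul, hda, hdb]
    exact ⟨hsq, hmul_mem _ (hSqSp haq) _ (hSqSp hbq)⟩
  -- disjointness of the A r's
  have hAdisj : ∀ r ∈ D, ∀ r' ∈ D, r ≠ r' → Disjoint (A r) (A r') := by
    intro r hr r' hr' hne
    rw [Finset.disjoint_left]
    intro x hx hx'
    obtain ⟨a, b, haq, hbq, hda, hdb, hxe⟩ := hAelt r x hx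
    obtain ⟨c, d, hcq, hdq, hdc, hdd, hxe'⟩ := hAelt r' x hx'
    obtain ⟨hmulr, h2r, hltr⟩ := hDfact r hr
    obtain ⟨hmulr', h2r', hltr'⟩ := hDfact r' hr'
    have heq : a * b = c * d := by rw [← hxe, ← hxe']
    rcases pe _ _ _ _ haq hbq hcq hdq heq with ⟨e1, e2⟩ | ⟨e1, e2⟩
    · exact hne (by rw [← hda, e1, hdc])
    · have h1 : r = n / r' := by rw [← hda, e1, hdd]
      have h2 : n / r = r' := by rw [← hdb, e2, hdc]
      have hnn : r * r' = n := by rw [h2] at hmulr; exact hmulr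
      have hrrn : r * r < n := by
        rw [hD, Finset.mem_filter] at hr; exact hr.2.2
      have hrrn' : r' * r' < n := by
        rw [hD, Finset.mem_filter] at hr'; exact hr'.2.2
      have hlt1 : r < r' := by
        have hh : r * r < r * r' := by rw [hnn]; exact hrrn
        exact Nat.lt_of_mul_lt_mul_left hh
      have hlt2 : r' < r := by
        have hh : r' * r' < r' * r := by rw [mul_comm r' r, hnn]; exact hrrn'
        exact Nat.lt_of_mul_lt_mul_left hh
      omega
  -- disjointness of A's with C
  have hACdisj : ∀ r ∈ D, Disjoint (A r) C := by
    intro r hr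
    rw [Finset.disjoint_left]
    intro x hx hx'
    obtain ⟨a, b, haq, hbq, hda, hdb, hxe⟩ := hAelt r x hx
    obtain ⟨hsq, c, d, hcq, hdq, hdc, hdd, hcd, hxe'⟩ := hCelt x hx'
    obtain ⟨hmulr, h2r, hltr⟩ := hDfact r hr
    have hrm : r < n.sqrt := by
      have h1 : r * r < n.sqrt * n.sqrt := by
        rw [hsq]
        have := hDfact r hr
        rw [hD, Finset.mem_filter] at hr
        exact hr.2.2
      exact Nat.mul_self_lt_mul_self_iff.mp h1
    have heq : a * b = c * d := by rw [← hxe, ← hxe']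
    rcases pe _ _ _ _ haq hbq hcq hdq heq with ⟨e1, e2⟩ | ⟨e1, e2⟩
    · have : r = n.sqrt := by rw [← hda, e1, hdc]
      omega
    · have : r = n.sqrt := by rw [← hda, e1, hdd]
      omega
  -- disjointness with Qf n (products are not primes)
  have hprodnotq : ∀ x ∈ D.biUnion A ∪ C, x ∉ Sq := by
    intro x hx
    rw [Finset.mem_union] at hx
    rcases hx with hx | hx
    · rw [Finset.mem_biUnion] at hx
      obtain ⟨r, hr, hx⟩ := hx
      obtain ⟨a, b, haq, hbq, hda, hdb, hxe⟩ := hAelt r x hx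
      obtain ⟨hmulr, h2r, hltr⟩ := hDfact r hr
      rw [hxe]
      refine np a b haq hbq (by rw [hda]; exact h2r) ?_
      rw [hdb]
      exact le_of_lt (lt_of_le_of_lt h2r hltr)
    · obtain ⟨hsq, a, b, haq, hbq, hda, hdb, hab, hxe⟩ := hCelt x hx
      have := hm2 hsq
      rw [hxe]
      exact np a b haq hbq (by omega) (by omega)
  have hQnsub : Qf n ⊆ Pf := by
    intro x hx
    rw [hQmem] at hx
    rw [hPmem]
    exact ⟨hx.1, hSqSp hx.2⟩
  -- assemble
  set U : Finset S := (D.biUnion A ∪ C) ∪ Qf n with hU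
  have hUsub : U ⊆ Pf := by
    intro x hx
    rw [hU, Finset.mem_union, Finset.mem_union] at hx
    rcases hx with (hx | hx) | hx
    · rw [Finset.mem_biUnion] at hx
      obtain ⟨r, hr, hx⟩ := hx
      exact hAsub r hr hx
    · exact hCsub hx
    · exact hQnsub hx
  have hdisj1 : Disjoint (D.biUnion A) C := by
    rw [Finset.disjoint_left]
    intro x hx hx'
    rw [Finset.mem_biUnion] at hx
    obtain ⟨r, hr, hx⟩ := hx
    exact Finset.disjoint_left.mp (hACdisj r hr) hx hx'
  have hdisj2 : Disjoint (D.biUnion A ∪ C) (Qf n) := by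
    rw [Finset.disjoint_left]
    intro x hx hx'
    exact hprodnotq x hx ((hQmem n x).mp hx').2
  have hUcard : U.card = (∑ r ∈ D, (A r).card) + C.card + (Qf n).card := by
    rw [hU, Finset.card_union_of_disjoint hdisj2, Finset.card_union_of_disjoint hdisj1,
      Finset.card_biUnion hAdisj]
  have hsum : ∑ r ∈ D, cntIn deg Sq r * cntIn deg Sq (n / r) = ∑ r ∈ D, (A r).card := by
    refine Finset.sum_congr rfl ?_
    intro r hr
    rw [hcntQ, hcntQ, hAcard r hr]
  calc (∑ r ∈ D, cntIn deg Sq r * cntIn deg Sq (n / r)) + cntIn deg Sq n +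
        (if n.sqrt * n.sqrt = n then (cntIn deg Sq n.sqrt).choose 2 else 0)
      = U.card := by
        rw [hUcard, hsum, hcntQ n, hcntQ n.sqrt, hCcard]
        ring
    _ ≤ Pf.card := Finset.card_le_card hUsub
    _ = cntIn deg Sp n := hcntP.symm

/-- In an arithmetical semiring `(S, +, □, ∂)` (additive monoid free on the additive primes `Sp`,
multiplicative monoid of additive primes free on the multiplicative primes `Sq`, degree a
semiring homomorphism to `ℕ` with finite fibers, `∂⁻¹(0) = {0}` and `∂⁻¹(1) ∩ Sp = {1}`),
for each `n ≥ 2`: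
`Σ_{r ∣ n, 2 ≤ r < √n} S□(r)·S□(n/r) ≤ S⁺(n) − S□(n) − C(n)`, where
`C(n) = binom(S□(√n), 2)` if `n` is a perfect square and `0` otherwise.
(Stated additively to avoid truncated subtraction.) -/
theorem stmt_6 {S : Type*} [CommSemiring S]
    (Sp Sq : Set S) (deg : S → ℕ)
    (hdeg_zero : deg 0 = 0) (hdeg_one : deg 1 = 1)
    (hdeg_add : ∀ x y : S, deg (x + y) = deg x + deg y)
    (hdeg_mul : ∀ x y : S, deg (x * y) = deg x * deg y)
    (hfiber0 : ∀ x : S, deg x = 0 ↔ x = 0)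
    (hfib : ∀ n : ℕ, {x : S | deg x = n}.Finite)
    (hadd_free : ∀ x : S, ∃! f : Sp →₀ ℕ, x = f.sum fun p n => n • (p : S))
    (hSqSp : Sq ⊆ Sp)
    (hone_mem : (1 : S) ∈ Sp)
    (hmul_mem : ∀ x ∈ Sp, ∀ y ∈ Sp, x * y ∈ Sp)
    (hmul_free : ∀ x ∈ Sp, ∃! f : Sq →₀ ℕ, x = f.prod fun q n => (q : S) ^ n)
    (hfiber1 : ∀ x ∈ Sp, (deg x = 1 ↔ x = 1)) :
    ∀ n : ℕ, 2 ≤ n →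
      (∑ r ∈ n.divisors.filter fun r => 2 ≤ r ∧ r * r < n,
            cntIn deg Sq r * cntIn deg Sq (n / r)) +
          cntIn deg Sq n +
          (if n.sqrt * n.sqrt = n then (cntIn deg Sq n.sqrt).choose 2 else 0) ≤
        cntIn deg Sp n :=
  stmt6_aux Sp Sq deg hdeg_mul hfib hSqSp hmul_mem hmul_free
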